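/- Let H be a finite-dimensional complex Hilbert space with dim H > 2k ≥ 2. If f : G_k(H) → G_k(H) preserves orthogonality in both directions (X ⊥ Y iff f(X) ⊥ f(Y)), then f is injective. -/

import Mathlib

open Module

private lemma aux_exists_between {K V : Type*} [Field K] [AddCommGroup V] [Module K V]
    [FiniteDimensional K V] (U T : Submodule K V) (hUT : U ≤ T) (k : ℕ)
    (h1 : finrank K U ≤ k) (h2 : k ≤ finrank K T) :
    ∃ W : Submodule K V, U ≤ W ∧ W ≤ T ∧ finrank K W = k := by
  induction k, h1 using Nat.le_induction with
  | base => exact ⟨U, le_rfl, hUT, rfl⟩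
  | succ k hk IH =>
    obtain ⟨W, hUW, hWT, hWk⟩ := IH (le_of_lt (Nat.lt_of_succ_le h2))
    have hWT' : ¬ (T ≤ W) := by
      intro h
      have := Submodule.finrank_mono h
      omega
    obtain ⟨v, hvT, hvW⟩ := SetLike.not_le_iff_exists.mp hWT'
    have hv0 : v ≠ 0 := fun h => hvW (h ▸ W.zero_mem)
    have hdisj : W ⊓ Submodule.span K {v} = ⊥ := by
      rw [eq_bot_iff]
      rintro x ⟨hxW, hxs⟩
      obtain ⟨c, rfl⟩ := Submodule.mem_span_singleton.mp hxs
      rcases eq_or_ne c 0 with rfl | hc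
      · simp
      · exfalso
        apply hvW
        have := W.smul_mem c⁻¹ hxW
        rwa [inv_smul_smul₀ hc] at this
    refine ⟨W ⊔ Submodule.span K {v}, hUW.trans le_sup_left, ?_, ?_⟩
    · exact sup_le hWT ((Submodule.span_singleton_le_iff_mem v T).mpr hvT)
    · have := Submodule.finrank_sup_add_finrank_inf_eq W (Submodule.span K {v})
      rw [hdisj] at this
      simp only [finrank_bot, add_zero] at this
      rw [this, hWk, finrank_span_singleton hv0]

theorem stmt_17 {H : Type*} [NormedAddCommGroup H] [InnerProductSpace ℂ H]
    [FiniteDimensional ℂ H] {k : ℕ} (hk : 1 ≤ k) (hdim : 2 * k < Module.finrank ℂ H)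
    (f : {X : Submodule ℂ H // Module.finrank ℂ ↥X = k} →
         {X : Submodule ℂ H // Module.finrank ℂ ↥X = k})
    (horth : ∀ X Y, (X.1 ⟂ Y.1 ↔ (f X).1 ⟂ (f Y).1)) :
    Function.Injective f := by
  intro X Y hf
  by_contra hne
  have hYX : ¬ (Y.1 ≤ X.1) := by
    intro hle
    exact hne (Subtype.ext (Submodule.eq_of_le_of_finrank_eq hle (by rw [X.2, Y.2])).symm)
  obtain ⟨v, hvY, hvX⟩ := SetLike.not_le_iff_exists.mp hYX
  set w : H := v - (Submodule.orthogonalProjectionOnto X.1 v : H) with hw_def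
  have hw_mem : w ∈ X.1ᗮ := Submodule.sub_starProjection_mem_orthogonal (K := X.1) v
  have hw_ne : w ≠ 0 := by
    intro h
    apply hvX
    have hv : v = (Submodule.orthogonalProjectionOnto X.1 v : H) := by
      rwa [hw_def, sub_eq_zero] at h
    rw [hv]
    exact (Submodule.orthogonalProjectionOnto X.1 v).2
  have hinner : inner ℂ w v ≠ (0 : ℂ) := by
    have hveq : v = (Submodule.orthogonalProjectionOnto X.1 v : H) + w := by
      rw [hw_def]; abel
    have hwp : inner ℂ w ((Submodule.orthogonalProjectionOnto X.1 v : H)) = (0 : ℂ) :=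
      (Submodule.mem_orthogonal' X.1 w).mp hw_mem _ (Submodule.orthogonalProjectionOnto X.1 v).2
    rw [hveq, inner_add_right, hwp, zero_add]
    exact inner_self_ne_zero.mpr hw_ne
  -- dimension of the orthogonal complement
  have hdim' : finrank ℂ X.1 + finrank ℂ X.1ᗮ = finrank ℂ H :=
    Submodule.finrank_add_finrank_orthogonal X.1
  have hk' : k ≤ finrank ℂ X.1ᗮ := by
    rw [X.2] at hdim'; omega
  have hspan_le : Submodule.span ℂ {w} ≤ X.1ᗮ :=
    (Submodule.span_singleton_le_iff_mem w X.1ᗮ).mpr hw_mem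
  obtain ⟨Z, hZ1, hZ2, hZ3⟩ := aux_exists_between (Submodule.span ℂ {w}) X.1ᗮ hspan_le k
    (by rw [finrank_span_singleton hw_ne]; exact hk) hk'
  have hZX : Z ⟂ X.1 := Submodule.isOrtho_iff_le.mpr hZ2
  have h1 := (horth ⟨Z, hZ3⟩ X).mp hZX
  rw [hf] at h1
  have hZY : Z ⟂ Y.1 := (horth ⟨Z, hZ3⟩ Y).mpr h1
  have hwZ : w ∈ Z := hZ1 (Submodule.mem_span_singleton_self w)
  exact hinner (hZY.inner_eq hwZ hvY)
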